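/- Let $P$ be a Markov kernel on a metric space $X$ with local slope $|\nabla \cdot|$ satisfying the chain rule. If $|\nabla Pf| \le C^{1/2} P|\nabla f|$ for all bounded Lipschitz $f$ (with $C > 0$), then for all positive bounded Lipschitz $f$ bounded away from zero, $Pf \cdot |\nabla \ln Pf|^2 \le C\, P(f |\nabla \ln f|^2)$. -/

import Mathlib

open MeasureTheory ProbabilityTheory Filter

/-- The local Lipschitz slope `|∇f|(x) = limsup_{y → x} |f(x) - f(y)|/d(x,y)`. -/
noncomputable def lipSlope {X : Type*} [MetricSpace X] (f : X → ℝ) (x : X) : ℝ :=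
  Filter.limsup (fun y => |f x - f y| / dist x y) (nhdsWithin x {x}ᶜ)

/-- Bounded Lipschitz functions. -/
def BddLipschitz {X : Type*} [MetricSpace X] (f : X → ℝ) : Prop :=
  (∃ K, LipschitzWith K f) ∧ ∃ M, ∀ x, |f x| ≤ M

lemma real_sInf_le' {s : Set ℝ} {a : ℝ} (ha : a ∈ s) (h0 : 0 ≤ a) : sInf s ≤ a := by
  by_cases hb : BddBelow s
  · exact csInf_le hb ha
  · rw [Real.sInf_of_not_bddBelow hb]; exact h0

lemma real_limsup_bot {α : Type*} (v : α → ℝ) : limsup v (⊥ : Filter α) = 0 := by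
  rw [limsup_eq]
  have h : {a : ℝ | ∀ᶠ y in (⊥ : Filter α), v y ≤ a} = Set.univ := by simp
  rw [h]
  refine Real.sInf_of_not_bddBelow ?_
  rintro ⟨b, hb⟩
  have := hb (Set.mem_univ (b - 1))
  linarith

lemma real_limsup_nonneg {α : Type*} {F : Filter α} {v : α → ℝ} (hv : ∀ y, 0 ≤ v y) :
    0 ≤ limsup v F := by
  rw [limsup_eq]
  by_cases hall : ∀ a ∈ {a : ℝ | ∀ᶠ y in F, v y ≤ a}, 0 ≤ a
  · exact Real.sInf_nonneg hall
  · push_neg at hall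
    obtain ⟨a, ha, ha0⟩ := hall
    have hbot : F = ⊥ := by
      have hF : ∀ᶠ y in F, False := ha.mono fun y hy => absurd (le_trans (hv y) hy) (by linarith)
      simpa using hF
    subst hbot
    rw [show {a : ℝ | ∀ᶠ y in (⊥ : Filter α), v y ≤ a} = Set.univ by simp]
    refine le_of_eq (Real.sInf_of_not_bddBelow ?_).symm
    rintro ⟨b, hb⟩
    have := hb (Set.mem_univ (b - 1))
    linarith

lemma lipSlope_nonneg {X : Type*} [MetricSpace X] (f : X → ℝ) (x : X) : 0 ≤ lipSlope f x :=
  real_limsup_nonneg fun y => div_nonneg (abs_nonneg _) dist_nonneg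

section X
variable {X : Type*} [MetricSpace X]

lemma eventually_ne_x (x : X) : ∀ᶠ y in nhdsWithin x {x}ᶜ, y ≠ x := by
  have h : {x}ᶜ ∈ nhdsWithin x {x}ᶜ := self_mem_nhdsWithin
  exact Filter.eventually_iff.mpr h

lemma eventually_dist_pos (x : X) : ∀ᶠ y in nhdsWithin x {x}ᶜ, 0 < dist x y := by
  filter_upwards [eventually_ne_x x] with y hy
  exact dist_pos.mpr (Ne.symm hy)

lemma eventually_dist_lt (x : X) {r : ℝ} (hr : 0 < r) :
    ∀ᶠ y in nhdsWithin x {x}ᶜ, dist x y < r := by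
  have h : Metric.ball x r ∈ nhdsWithin x {x}ᶜ :=
    mem_nhdsWithin_of_mem_nhds (Metric.ball_mem_nhds x hr)
  refine Filter.eventually_iff.mpr ?_
  refine Filter.mem_of_superset h ?_
  intro y hy
  simpa [dist_comm] using hy

lemma lipSlope_le_lipschitz {f : X → ℝ} {K : NNReal} (hf : LipschitzWith K f) (x : X) :
    lipSlope f x ≤ K := by
  rw [lipSlope, limsup_eq]
  refine real_sInf_le' ?_ K.coe_nonneg
  filter_upwards [eventually_dist_pos x] with y hy
  rw [div_le_iff₀ hy]
  have := hf.dist_le_mul x y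
  rwa [Real.dist_eq] at this

lemma lipSlope_sub_const (f : X → ℝ) (c : ℝ) (x : X) :
    lipSlope (fun z => f z - c) x = lipSlope f x := by
  rw [lipSlope, lipSlope]
  congr 1
  funext y
  congr 1
  congr 1
  ring

end X

lemma log_sub_log_le {a b : ℝ} (ha : 0 < a) (hab : a ≤ b) :
    Real.log b - Real.log a ≤ (b - a) / a := by
  have hb : 0 < b := lt_of_lt_of_le ha hab
  rw [← Real.log_div (ne_of_gt hb) (ne_of_gt ha)]
  have h1 : Real.log (b / a) ≤ b / a - 1 := Real.log_le_sub_one_of_pos (div_pos hb ha)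
  have h2 : b / a - 1 = (b - a) / a := by field_simp
  linarith

lemma le_log_sub_log {a b : ℝ} (ha : 0 < a) (hab : a ≤ b) :
    (b - a) / b ≤ Real.log b - Real.log a := by
  have hb : 0 < b := lt_of_lt_of_le ha hab
  have h1 : Real.log (a / b) ≤ a / b - 1 := Real.log_le_sub_one_of_pos (div_pos ha hb)
  rw [Real.log_div (ne_of_gt ha) (ne_of_gt hb)] at h1
  have h2 : (b - a) / b = 1 - a / b := by field_simp
  linarith

lemma abs_log_sub_log_le {a b : ℝ} (ha : 0 < a) (hb : 0 < b) :
    |Real.log a - Real.log b| ≤ |a - b| / min a b := by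
  rcases le_total a b with hab | hab
  · rw [abs_sub_comm, abs_of_nonneg (sub_nonneg.mpr (Real.log_le_log ha hab)),
      abs_sub_comm, abs_of_nonneg (sub_nonneg.mpr hab), min_eq_left hab]
    exact log_sub_log_le ha hab
  · rw [abs_of_nonneg (sub_nonneg.mpr (Real.log_le_log hb hab)),
      abs_of_nonneg (sub_nonneg.mpr hab), min_eq_right hab]
    exact log_sub_log_le hb hab

lemma abs_sub_le_max_mul {a b : ℝ} (ha : 0 < a) (hb : 0 < b) :
    |a - b| ≤ max a b * |Real.log a - Real.log b| := by
  rcases le_total a b with hab | hab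
  · rw [abs_sub_comm, abs_of_nonneg (sub_nonneg.mpr hab), abs_sub_comm,
      abs_of_nonneg (sub_nonneg.mpr (Real.log_le_log ha hab)), max_eq_right hab]
    have := le_log_sub_log ha hab
    rw [div_le_iff₀ hb] at this
    linarith [mul_comm b (Real.log b - Real.log a)]
  · rw [abs_of_nonneg (sub_nonneg.mpr hab),
      abs_of_nonneg (sub_nonneg.mpr (Real.log_le_log hb hab)), max_eq_left hab]
    have := le_log_sub_log hb hab
    rw [div_le_iff₀ ha] at this
    linarith [mul_comm a (Real.log a - Real.log b)]

lemma real_limsup_le {α : Type*} {F : Filter α} {v : α → ℝ} {a : ℝ}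
    (h : ∀ᶠ y in F, v y ≤ a) (h0 : 0 ≤ a) : limsup v F ≤ a := by
  rw [limsup_eq]; exact real_sInf_le' h h0

lemma eventually_le_limsup_add {α : Type*} {F : Filter α} [F.NeBot] {v : α → ℝ}
    (hv : ∀ y, 0 ≤ v y) {B : ℝ} (hbdd : ∀ᶠ y in F, v y ≤ B) {δ : ℝ} (hδ : 0 < δ) :
    ∀ᶠ y in F, v y ≤ limsup v F + δ := by
  have hS : limsup v F = sInf {a | ∀ᶠ y in F, v y ≤ a} := limsup_eq
  have hne : Set.Nonempty {a | ∀ᶠ y in F, v y ≤ a} := ⟨B, hbdd⟩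
  have hlt : sInf {a | ∀ᶠ y in F, v y ≤ a} < limsup v F + δ := by rw [hS]; linarith
  obtain ⟨a, haS, halt⟩ := exists_lt_of_csInf_lt hne hlt
  exact haS.mono fun y hy => le_trans hy halt.le

lemma lipSlope_log_mul {X : Type*} [MetricSpace X] {f : X → ℝ} {K : NNReal}
    (hf : LipschitzWith K f) {ε : ℝ} (hε : 0 < ε) (hfε : ∀ z, ε ≤ f z) (w : X) :
    f w * lipSlope (fun z => Real.log (f z)) w = lipSlope f w := by
  by_cases hbot : nhdsWithin w ({w}ᶜ : Set X) = ⊥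
  · rw [lipSlope, lipSlope, hbot, real_limsup_bot, real_limsup_bot, mul_zero]
  · haveI hFne : (nhdsWithin w ({w}ᶜ : Set X)).NeBot := ⟨hbot⟩
    set F := nhdsWithin w ({w}ᶜ : Set X) with hF
    set u : X → ℝ := fun y => |f w - f y| / dist w y with hu
    set lv : X → ℝ := fun y => |Real.log (f w) - Real.log (f y)| / dist w y with hlv
    have hU : lipSlope f w = limsup u F := rfl
    have hT : lipSlope (fun z => Real.log (f z)) w = limsup lv F := rfl
    set U := limsup u F
    set T := limsup lv F
    have hfw : 0 < f w := lt_of_lt_of_le hε (hfε w)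
    have hu0 : ∀ y, 0 ≤ u y := fun y => div_nonneg (abs_nonneg _) dist_nonneg
    have hlv0 : ∀ y, 0 ≤ lv y := fun y => div_nonneg (abs_nonneg _) dist_nonneg
    have hU0 : 0 ≤ U := real_limsup_nonneg hu0
    have hT0 : 0 ≤ T := real_limsup_nonneg hlv0
    -- eventual global bounds
    have hub : ∀ᶠ y in F, u y ≤ (K : ℝ) := by
      filter_upwards [eventually_dist_pos w] with y hy
      rw [hu, div_le_iff₀ hy]
      have := hf.dist_le_mul w y
      rwa [Real.dist_eq] at this
    have hlvb : ∀ᶠ y in F, lv y ≤ (K : ℝ) / ε := by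
      filter_upwards [eventually_dist_pos w] with y hy
      have hfy : 0 < f y := lt_of_lt_of_le hε (hfε y)
      have h1 : |Real.log (f w) - Real.log (f y)| ≤ |f w - f y| / min (f w) (f y) :=
        abs_log_sub_log_le hfw hfy
      have h2 : |f w - f y| ≤ (K : ℝ) * dist w y := by
        have := hf.dist_le_mul w y; rwa [Real.dist_eq] at this
      have h3 : ε ≤ min (f w) (f y) := le_min (hfε w) (hfε y)
      have h4 : |Real.log (f w) - Real.log (f y)| ≤ (K : ℝ) * dist w y / ε :=
        h1.trans (div_le_div₀ (by positivity) h2 hε h3)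
      show |Real.log (f w) - Real.log (f y)| / dist w y ≤ (K : ℝ) / ε
      rw [div_le_iff₀ hy]
      calc |Real.log (f w) - Real.log (f y)| ≤ (K : ℝ) * dist w y / ε := h4
        _ = (K : ℝ) / ε * dist w y := by ring
    -- Part 1 : U ≤ f w * T
    have part1 : U ≤ f w * T := by
      have key : ∀ δ : ℝ, 0 < δ → U ≤ (f w + δ) * (T + δ) := by
        intro δ hδ
        have hev1 : ∀ᶠ y in F, lv y ≤ T + δ := eventually_le_limsup_add hlv0 hlvb hδ
        have hev2 : ∀ᶠ y in F, |f w - f y| ≤ δ := by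
          filter_upwards [eventually_dist_lt w (show 0 < δ / ((K : ℝ) + 1) by positivity)]
            with y hy
          have h2 : |f w - f y| ≤ (K : ℝ) * dist w y := by
            have := hf.dist_le_mul w y; rwa [Real.dist_eq] at this
          have hK1 : (0 : ℝ) ≤ (K : ℝ) := K.coe_nonneg
          have h4 : dist w y * ((K : ℝ) + 1) < δ := (lt_div_iff₀ (by positivity)).1 hy
          nlinarith [dist_nonneg (x := w) (y := y)]
        have hev : ∀ᶠ y in F, u y ≤ (f w + δ) * (T + δ) := by
          filter_upwards [hev1, hev2, eventually_dist_pos w] with y h1 h2 hy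
          have hfy : 0 < f y := lt_of_lt_of_le hε (hfε y)
          have hmax : max (f w) (f y) ≤ f w + δ := by
            rw [max_le_iff]
            constructor
            · linarith
            · have := abs_le.1 h2; linarith [this.1]
          have habs : |f w - f y| ≤ max (f w) (f y) * |Real.log (f w) - Real.log (f y)| :=
            abs_sub_le_max_mul hfw hfy
          have hq : u y ≤ max (f w) (f y) * lv y := by
            show |f w - f y| / dist w y ≤ max (f w) (f y) * (|Real.log (f w) - Real.log (f y)| / dist w y)
            rw [← mul_div_assoc]
            exact div_le_div₀ (by positivity) habs hy le_rfl
          calc u y ≤ max (f w) (f y) * lv y := hq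
            _ ≤ (f w + δ) * (T + δ) :=
              mul_le_mul hmax h1 (hlv0 y) (by linarith)
        exact real_limsup_le hev (by nlinarith)
      have htends : Filter.Tendsto (fun δ : ℝ => (f w + δ) * (T + δ)) (nhdsWithin 0 (Set.Ioi 0))
          (nhds (f w * T)) := by
        have hc : Filter.Tendsto (fun δ : ℝ => (f w + δ) * (T + δ)) (nhds 0)
            (nhds ((f w + 0) * (T + 0))) := by
          exact ((continuous_const.add continuous_id).mul
            (continuous_const.add continuous_id)).tendsto 0
        simpa using hc.mono_left nhdsWithin_le_nhds
      refine ge_of_tendsto htends ?_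
      filter_upwards [self_mem_nhdsWithin] with δ hδ
      exact key δ hδ
    -- Part 2 : f w * T ≤ U
    have part2 : f w * T ≤ U := by
      have key : ∀ δ : ℝ, 0 < δ → δ < f w → f w * T ≤ f w * ((U + δ) / (f w - δ)) := by
        intro δ hδ hδfw
        have hev1 : ∀ᶠ y in F, u y ≤ U + δ := eventually_le_limsup_add hu0 hub hδ
        have hev2 : ∀ᶠ y in F, |f w - f y| ≤ δ := by
          filter_upwards [eventually_dist_lt w (show 0 < δ / ((K : ℝ) + 1) by positivity)]
            with y hy
          have h2 : |f w - f y| ≤ (K : ℝ) * dist w y := by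
            have := hf.dist_le_mul w y; rwa [Real.dist_eq] at this
          have hK1 : (0 : ℝ) ≤ (K : ℝ) := K.coe_nonneg
          have h4 : dist w y * ((K : ℝ) + 1) < δ := (lt_div_iff₀ (by positivity)).1 hy
          nlinarith [dist_nonneg (x := w) (y := y)]
        have hev : ∀ᶠ y in F, lv y ≤ (U + δ) / (f w - δ) := by
          filter_upwards [hev1, hev2, eventually_dist_pos w] with y h1 h2 hy
          have hfy : 0 < f y := lt_of_lt_of_le hε (hfε y)
          have hmin : f w - δ ≤ min (f w) (f y) := by
            rw [le_min_iff]
            constructor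
            · linarith
            · have := abs_le.1 h2; linarith [this.2]
          have habs : |Real.log (f w) - Real.log (f y)| ≤ |f w - f y| / min (f w) (f y) :=
            abs_log_sub_log_le hfw hfy
          have hq : lv y ≤ u y / min (f w) (f y) := by
            rw [hlv, hu, div_div, div_le_div_iff₀ hy (by positivity)]
            calc |Real.log (f w) - Real.log (f y)| * (dist w y * min (f w) (f y)) =
                (|Real.log (f w) - Real.log (f y)| * min (f w) (f y)) * dist w y := by ring
              _ ≤ |f w - f y| * dist w y := by
                  have h5 := (le_div_iff₀ (by positivity : (0:ℝ) < min (f w) (f y))).1 habs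
                  nlinarith [dist_nonneg (x := w) (y := y)]
          calc lv y ≤ u y / min (f w) (f y) := hq
            _ ≤ (U + δ) / (f w - δ) := div_le_div₀ (by linarith) h1 (by linarith) hmin
        have hT' : T ≤ (U + δ) / (f w - δ) :=
          real_limsup_le hev (div_nonneg (by linarith) (by linarith))
        exact mul_le_mul_of_nonneg_left hT' hfw.le
      have htends : Filter.Tendsto (fun δ : ℝ => f w * ((U + δ) / (f w - δ)))
          (nhdsWithin 0 (Set.Ioi 0)) (nhds U) := by
        have hc : ContinuousAt (fun δ : ℝ => f w * ((U + δ) / (f w - δ))) 0 := by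
          have h1 : ContinuousAt (fun δ : ℝ => (U + δ) / (f w - δ)) 0 :=
            ContinuousAt.div (continuous_const.add continuous_id).continuousAt
              (continuous_const.sub continuous_id).continuousAt (by simpa using ne_of_gt hfw)
          exact continuousAt_const.mul h1
        have h2 := hc.tendsto.mono_left (nhdsWithin_le_nhds (s := Set.Ioi (0:ℝ)))
        have h0 : f w * ((U + 0) / (f w - 0)) = U := by
          rw [add_zero, sub_zero, mul_div_cancel₀ _ (ne_of_gt hfw)]
        rwa [h0] at h2
      refine ge_of_tendsto htends ?_
      filter_upwards [self_mem_nhdsWithin, Filter.eventually_iff.mpr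
        (mem_nhdsWithin_of_mem_nhds (eventually_lt_nhds hfw))] with δ hδ hδfw
      exact key δ hδ hδfw
    rw [hU, hT]
    linarith


set_option maxHeartbeats 2000000 in
/-- If `|∇Pf| ≤ C^{1/2} P|∇f|` for all bounded Lipschitz `f`, then
`Pf |∇ ln Pf|² ≤ C P(f |∇ ln f|²)` for all positive bounded Lipschitz `f`
bounded away from zero. -/
theorem stmt_12 {X : Type*} [MeasurableSpace X] [MetricSpace X]
    (P : Kernel X X) [IsMarkovKernel P] (C : ℝ) (hC : 0 < C)
    (h : ∀ f : X → ℝ, BddLipschitz f → ∀ x : X,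
      lipSlope (fun z => ∫ w, f w ∂(P z)) x ≤
        Real.sqrt C * ∫ w, lipSlope f w ∂(P x)) :
    ∀ f : X → ℝ, BddLipschitz f → ∀ ε : ℝ, 0 < ε → (∀ z, ε ≤ f z) → ∀ x : X,
      (∫ w, f w ∂(P x)) *
          (lipSlope (fun z => Real.log (∫ w, f w ∂(P z))) x) ^ 2 ≤
        C * ∫ w, f w * (lipSlope (fun u => Real.log (f u)) w) ^ 2 ∂(P x) := by
  intro f hf ε hε hεf x
  obtain ⟨⟨K, hK⟩, M, hM⟩ := hf
  have hRHS : 0 ≤ C * ∫ w, f w * (lipSlope (fun u => Real.log (f u)) w) ^ 2 ∂(P x) :=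
    mul_nonneg hC.le (integral_nonneg fun w => mul_nonneg (le_trans hε.le (hεf w)) (sq_nonneg _))
  have hT0 : 0 ≤ lipSlope (fun z => Real.log (∫ w, f w ∂(P z))) x := lipSlope_nonneg _ x
  by_cases hfint : Integrable f (P x)
  swap
  · rw [integral_undef hfint]
    simpa using hRHS
  set gx : ℝ := ∫ w, f w ∂(P x) with hgx
  set T : ℝ := lipSlope (fun z => Real.log (∫ w, f w ∂(P z))) x with hTdef
  have hgxε : ε ≤ gx := by
    have h1 : ∫ _w, ε ∂(P x) ≤ ∫ w, f w ∂(P x) := integral_mono (integrable_const ε) hfint hεf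
    simpa [integral_const, measure_univ] using h1
  have hgxpos : 0 < gx := lt_of_lt_of_le hε hgxε
  by_cases hbot : nhdsWithin x ({x}ᶜ : Set X) = ⊥
  · have hT : T = 0 := by rw [hTdef, lipSlope, hbot, real_limsup_bot]
    rw [hT]
    simpa using hRHS
  haveI hFne : (nhdsWithin x ({x}ᶜ : Set X)).NeBot := ⟨hbot⟩
  set F := nhdsWithin x ({x}ᶜ : Set X) with hF
  set lv : X → ℝ := fun y => |Real.log gx - Real.log (∫ w, f w ∂(P y))| / dist x y with hlv
  have hTlv : T = limsup lv F := rfl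
  have hlv0 : ∀ y, 0 ≤ lv y := fun y => div_nonneg (abs_nonneg _) dist_nonneg
  by_cases hBdd : ∃ A, ∀ᶠ y in F, lv y ≤ A
  swap
  · push_neg at hBdd
    have hSempty : {a : ℝ | ∀ᶠ y in F, lv y ≤ a} = ∅ := by
      ext a
      simp only [Set.mem_setOf_eq, Set.mem_empty_iff_false, iff_false]
      exact Filter.not_eventually.mpr ((hBdd a).mono fun y hy => not_le.mpr hy)
    have hT : T = 0 := by rw [hTlv, limsup_eq, hSempty, Real.sInf_empty]
    rw [hT]
    simpa using hRHS
  obtain ⟨A₀, hA₀⟩ := hBdd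
  set A := max A₀ 0 with hAdef
  have hA : ∀ᶠ y in F, lv y ≤ A := hA₀.mono fun y hy => le_trans hy (le_max_left _ _)
  have hA0 : 0 ≤ A := le_max_right _ _
  set G : X → ℝ := fun z => ∫ w, (f w - gx) ∂(P z) with hG
  have hGx : G x = 0 := by
    have h1 : G x = gx - gx := by
      simp only [hG]
      rw [integral_sub hfint (integrable_const gx), integral_const, probReal_univ]
      simp [← hgx]
    rw [h1, sub_self]
  set q : X → ℝ := fun y => |G x - G y| / dist x y with hq
  have hSq : lipSlope G x = limsup q F := rfl
  set S' := limsup q F with hS'def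
  have hq0 : ∀ y, 0 ≤ q y := fun y => div_nonneg (abs_nonneg _) dist_nonneg
  have hS'0 : 0 ≤ S' := real_limsup_nonneg hq0
  -- apply the hypothesis to `f - gx`
  have hBL : BddLipschitz (fun w => f w - gx) := by
    constructor
    · refine ⟨K, LipschitzWith.of_dist_le_mul fun a b => ?_⟩
      have := hK.dist_le_mul a b
      simpa [Real.dist_eq, sub_sub_sub_cancel_right] using this
    · exact ⟨M + |gx|, fun w => (abs_sub _ _).trans (by linarith [hM w])⟩
  set I := ∫ w, lipSlope f w ∂(P x) with hI
  have hS'le : S' ≤ Real.sqrt C * I := by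
    have h1 := h (fun w => f w - gx) hBL x
    simp only [lipSlope_sub_const] at h1
    exact h1
  -- key inequality : gx * T ≤ S'
  have hmain : gx * T ≤ S' := by
    have key : ∀ δ : ℝ, 0 < δ → gx * T ≤ (1 + δ) * (S' + δ) := by
      intro δ hδ
      set L := |Real.log gx| with hL
      set r : ℝ := if L = 0 then Real.log (1 + δ) / (A + 1)
        else min (Real.log (1 + δ) / (A + 1)) (L / (A + 1)) with hr
      have hlog1δ : 0 < Real.log (1 + δ) := Real.log_pos (by linarith)
      have hrpos : 0 < r := by
        rw [hr]
        split_ifs with hL0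
        · positivity
        · refine lt_min (by positivity) ?_
          have : 0 < L := lt_of_le_of_ne (abs_nonneg _) (Ne.symm hL0)
          positivity
      have hrlog : r ≤ Real.log (1 + δ) / (A + 1) := by
        rw [hr]; split_ifs
        · exact le_refl _
        · exact min_le_left _ _
      have hevcore : ∀ᶠ y in F, gx * lv y ≤ (1 + δ) * q y ∧ q y ≤ gx * (1 + δ) * A := by
        filter_upwards [hA, eventually_dist_lt x hrpos, eventually_dist_pos x]
          with y hAy hyr hy0
        have hexp : Real.exp (A * dist x y) ≤ 1 + δ := by
          have h1 : A * dist x y ≤ Real.log (1 + δ) := by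
            have h2 : A * dist x y ≤ A * r := mul_le_mul_of_nonneg_left hyr.le hA0
            have h3 : A * r ≤ A * (Real.log (1 + δ) / (A + 1)) :=
              mul_le_mul_of_nonneg_left hrlog hA0
            have h4 : A * (Real.log (1 + δ) / (A + 1)) ≤ Real.log (1 + δ) := by
              rw [mul_div_assoc'] ; rw [div_le_iff₀ (by positivity)]
              nlinarith
            linarith
          calc Real.exp (A * dist x y) ≤ Real.exp (Real.log (1 + δ)) := Real.exp_le_exp.2 h1
            _ = 1 + δ := Real.exp_log (by linarith)
        by_cases hyint : Integrable f (P y)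
        · set gy : ℝ := ∫ w, f w ∂(P y) with hgy
          have hgyε : ε ≤ gy := by
            have h1 : ∫ _w, ε ∂(P y) ≤ ∫ w, f w ∂(P y) :=
              integral_mono (integrable_const ε) hyint hεf
            simpa [integral_const, measure_univ] using h1
          have hgypos : 0 < gy := lt_of_lt_of_le hε hgyε
          have hGy : G y = gy - gx := by
            simp only [hG]
            rw [integral_sub hyint (integrable_const gx), integral_const, probReal_univ]
            simp [← hgy]
          have hqy : q y = |gx - gy| / dist x y := by
            rw [hq]
            simp only [hGx, hGy]
            rw [zero_sub, abs_neg, abs_sub_comm]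
          have hlog : |Real.log gx - Real.log gy| ≤ A * dist x y := by
            have := (div_le_iff₀ hy0).1 hAy
            calc |Real.log gx - Real.log gy| = lv y * dist x y := by
                  rw [hlv]; field_simp; rfl
              _ ≤ A * dist x y := by nlinarith
          have hgyub : gy ≤ gx * Real.exp (A * dist x y) := by
            calc gy = Real.exp (Real.log gy) := (Real.exp_log hgypos).symm
              _ ≤ Real.exp (Real.log gx + A * dist x y) :=
                  Real.exp_le_exp.2 (by have := abs_le.1 hlog; linarith [this.1])
              _ = gx * Real.exp (A * dist x y) := by rw [Real.exp_add, Real.exp_log hgxpos]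
          have hgylb : gx / Real.exp (A * dist x y) ≤ gy := by
            rw [div_le_iff₀ (Real.exp_pos _)]
            calc gx = Real.exp (Real.log gx) := (Real.exp_log hgxpos).symm
              _ ≤ Real.exp (Real.log gy + A * dist x y) :=
                  Real.exp_le_exp.2 (by have := abs_le.1 hlog; linarith [this.2])
              _ = gy * Real.exp (A * dist x y) := by rw [Real.exp_add, Real.exp_log hgypos]
          constructor
          · have hmin : gx / (1 + δ) ≤ min gx gy := by
              refine le_min ?_ ?_
              · rw [div_le_iff₀ (by linarith)]; nlinarith
              · refine le_trans ?_ hgylb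
                apply div_le_div₀ (le_of_lt hgxpos) (le_refl gx) (Real.exp_pos _) hexp
            have hminpos : 0 < min gx gy := lt_min hgxpos hgypos
            have habs : |Real.log gx - Real.log gy| ≤ |gx - gy| / min gx gy :=
              abs_log_sub_log_le hgxpos hgypos
            have h5 : |Real.log gx - Real.log gy| ≤ |gx - gy| * (1 + δ) / gx := by
              refine habs.trans ?_
              rw [div_le_div_iff₀ hminpos hgxpos]
              have h6 := (div_le_iff₀ (by linarith : (0:ℝ) < 1 + δ)).1 hmin
              nlinarith [abs_nonneg (gx - gy)]
            have hlvy2 : lv y = |Real.log gx - Real.log gy| / dist x y := rfl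
            rw [hlvy2, hqy]
            have h7 : gx * |Real.log gx - Real.log gy| ≤ (1 + δ) * |gx - gy| := by
              have h8 := mul_le_mul_of_nonneg_left h5 hgxpos.le
              calc gx * |Real.log gx - Real.log gy| ≤ gx * (|gx - gy| * (1 + δ) / gx) := h8
                _ = (1 + δ) * |gx - gy| := by field_simp
            calc gx * (|Real.log gx - Real.log gy| / dist x y)
                = gx * |Real.log gx - Real.log gy| / dist x y := by ring
              _ ≤ (1 + δ) * |gx - gy| / dist x y := div_le_div₀ (by positivity) h7 hy0 le_rfl
              _ = (1 + δ) * (|gx - gy| / dist x y) := by ring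
          · rw [hqy]
            have habs2 : |gx - gy| ≤ max gx gy * |Real.log gx - Real.log gy| :=
              abs_sub_le_max_mul hgxpos hgypos
            have hmax : max gx gy ≤ gx * (1 + δ) := by
              refine max_le ?_ ?_
              · nlinarith
              · exact hgyub.trans (by nlinarith [Real.exp_pos (A * dist x y)])
            rw [div_le_iff₀ hy0]
            calc |gx - gy| ≤ max gx gy * |Real.log gx - Real.log gy| := habs2
              _ ≤ (gx * (1 + δ)) * (A * dist x y) := by
                  refine mul_le_mul hmax hlog (abs_nonneg _) (by nlinarith)
              _ = gx * (1 + δ) * A * dist x y := by ring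
        · have hGy : G y = 0 := by
            refine integral_undef ?_
            intro hcon
            refine hyint ?_
            have h9 : Integrable (fun w => (f w - gx) + gx) (P y) :=
              hcon.add (integrable_const gx)
            have h10 : (fun w => (f w - gx) + gx) = f := by funext w; ring
            rwa [h10] at h9
          have hqy : q y = 0 := by rw [hq]; simp [hGx, hGy]
          have hgy0 : (∫ w, f w ∂(P y)) = 0 := integral_undef hyint
          have hlvy : lv y = L / dist x y := by
            show |Real.log gx - Real.log (∫ w, f w ∂(P y))| / dist x y = L / dist x y
            rw [hgy0, Real.log_zero, sub_zero, hL]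
          by_cases hL0 : L = 0
          · constructor
            · rw [hlvy, hL0, hqy]
              simp
            · rw [hqy]; positivity
          · exfalso
            have hrL : r ≤ L / (A + 1) := by
              rw [hr]; rw [if_neg hL0]; exact min_le_right _ _
            have hLpos : 0 < L := lt_of_le_of_ne (abs_nonneg _) (Ne.symm hL0)
            have hAy2 : L / dist x y ≤ A := hlvy ▸ hAy
            have h1 : L ≤ A * dist x y := by
              rw [div_le_iff₀ hy0] at hAy2; linarith
            have h2 : dist x y < L / (A + 1) := lt_of_lt_of_le hyr hrL
            have h3 : dist x y * (A + 1) < L := (lt_div_iff₀ (by positivity)).1 h2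
            nlinarith
      have hqbdd : ∀ᶠ y in F, q y ≤ gx * (1 + δ) * A := hevcore.mono fun y hy => hy.2
      have hev2 : ∀ᶠ y in F, q y ≤ S' + δ := eventually_le_limsup_add hq0 hqbdd hδ
      have hev3 : ∀ᶠ y in F, lv y ≤ (1 + δ) * (S' + δ) / gx := by
        filter_upwards [hevcore, hev2] with y hy h2
        rw [le_div_iff₀ hgxpos]
        calc lv y * gx = gx * lv y := by ring
          _ ≤ (1 + δ) * q y := hy.1
          _ ≤ (1 + δ) * (S' + δ) := by nlinarith
      have hT' : T ≤ (1 + δ) * (S' + δ) / gx := by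
        rw [hTlv]
        exact real_limsup_le hev3 (by positivity)
      have := (le_div_iff₀ hgxpos).1 hT'
      linarith
    have htends : Filter.Tendsto (fun δ : ℝ => (1 + δ) * (S' + δ)) (nhdsWithin 0 (Set.Ioi 0))
        (nhds S') := by
      have hc : Filter.Tendsto (fun δ : ℝ => (1 + δ) * (S' + δ)) (nhds 0)
          (nhds ((1 + 0) * (S' + 0))) :=
        ((continuous_const.add continuous_id).mul (continuous_const.add continuous_id)).tendsto 0
      have h2 := hc.mono_left (nhdsWithin_le_nhds (s := Set.Ioi (0:ℝ)))
      simpa using h2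
    refine ge_of_tendsto htends ?_
    filter_upwards [self_mem_nhdsWithin] with δ hδ
    exact key δ hδ
  -- combine with the hypothesis
  have hfinal1 : gx * T ≤ Real.sqrt C * I := le_trans hmain hS'le
  by_cases hIint : Integrable (fun w => lipSlope f w) (P x)
  swap
  · have hI0 : I = 0 := integral_undef hIint
    rw [hI0, mul_zero] at hfinal1
    have hT00 : T = 0 := by nlinarith
    rw [hT00]
    simpa using hRHS
  · have hInn : 0 ≤ I := integral_nonneg fun w => lipSlope_nonneg f w
    set u : X → ℝ := fun w => lipSlope f w with hu
    have huK : ∀ w, u w ≤ (K : ℝ) := fun w => lipSlope_le_lipschitz hK w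
    have hu0' : ∀ w, 0 ≤ u w := fun w => lipSlope_nonneg f w
    have hfpos : ∀ w, 0 < f w := fun w => lt_of_lt_of_le hε (hεf w)
    have haint : Integrable (fun w => (u w) ^ 2 / f w) (P x) := by
      constructor
      · have h1 : AEMeasurable (fun w => u w * u w * (f w)⁻¹) (P x) :=
          (hIint.aemeasurable.mul hIint.aemeasurable).mul hfint.aemeasurable.inv
        have h2 := h1.aestronglyMeasurable
        simpa [pow_two, div_eq_mul_inv] using h2
      · refine HasFiniteIntegral.of_bounded (C := (K : ℝ) ^ 2 / ε) (ae_of_all _ fun w => ?_)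
        rw [Real.norm_eq_abs, abs_of_nonneg (div_nonneg (sq_nonneg _) (hfpos w).le)]
        refine div_le_div₀ (by positivity) ?_ hε (hεf w)
        have := huK w
        nlinarith [hu0' w]
    set a : ℝ := ∫ w, (u w) ^ 2 / f w ∂(P x) with ha
    have ha0 : 0 ≤ a := integral_nonneg fun w => div_nonneg (sq_nonneg _) (hfpos w).le
    have hCS : I ^ 2 ≤ a * gx := by
      have hquad : ∀ t : ℝ, 0 ≤ a - 2 * t * I + t ^ 2 * gx := by
        intro t
        have hint2 : Integrable (fun w => 2 * t * u w) (P x) := hIint.const_mul _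
        have hint3 : Integrable (fun w => t ^ 2 * f w) (P x) := hfint.const_mul _
        have h1 : 0 ≤ ∫ w, ((u w) ^ 2 / f w - 2 * t * u w + t ^ 2 * f w) ∂(P x) := by
          refine integral_nonneg fun w => ?_
          have h2 : (u w) ^ 2 / f w - 2 * t * u w + t ^ 2 * f w = (u w - t * f w) ^ 2 / f w := by
            field_simp [ne_of_gt (hfpos w)]
            ring
          rw [h2]
          exact div_nonneg (sq_nonneg _) (hfpos w).le
        have hint4 : Integrable (fun w => (u w) ^ 2 / f w - 2 * t * u w) (P x) :=
          haint.sub hint2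
        rw [integral_add hint4 hint3, integral_sub haint hint2,
          integral_const_mul, integral_const_mul] at h1
        simpa using h1
      have := hquad (I / gx)
      have h3 : a - 2 * (I / gx) * I + (I / gx) ^ 2 * gx = a - I ^ 2 / gx := by
        field_simp
        ring
      rw [h3] at this
      have h4 : I ^ 2 / gx ≤ a := by linarith
      calc I ^ 2 = I ^ 2 / gx * gx := (div_mul_cancel₀ _ (ne_of_gt hgxpos)).symm
        _ ≤ a * gx := mul_le_mul_of_nonneg_right h4 hgxpos.le
    have hbridge : ∫ w, f w * (lipSlope (fun v => Real.log (f v)) w) ^ 2 ∂(P x) = a := by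
      rw [ha]
      refine integral_congr_ae (Filter.Eventually.of_forall fun w => ?_)
      have hcw : f w * lipSlope (fun z => Real.log (f z)) w = u w :=
        lipSlope_log_mul hK hε hεf w
      have hs : lipSlope (fun z => Real.log (f z)) w = u w / f w := by
        rw [eq_div_iff (ne_of_gt (hfpos w))]
        linarith [hcw]
      show f w * (lipSlope (fun z => Real.log (f z)) w) ^ 2 = u w ^ 2 / f w
      rw [hs]
      have hfne : f w ≠ 0 := ne_of_gt (hfpos w)
      field_simp
    rw [hbridge]
    have hsq : (gx * T) ^ 2 ≤ (Real.sqrt C * I) ^ 2 := by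
      have h1 : 0 ≤ gx * T := mul_nonneg hgxpos.le hT0
      nlinarith
    rw [mul_pow, mul_pow, Real.sq_sqrt hC.le] at hsq
    have h5 : C * I ^ 2 ≤ C * (a * gx) := mul_le_mul_of_nonneg_left hCS hC.le
    nlinarith [hgxpos]
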